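/- Let G be an n'-right regular bipartite graph, C' an [n',k] MDS code, and C = (G,C') a Tanner code. If S is a k-forcing set for G, then S contains an information set for C; i.e., there exists B ⊆ S with #B = dim C and C^B = F_q^B. -/

import Mathlib

open Finset

def TStep {V1 V2 : Type*} [DecidableEq V1] (N : V2 → Finset V1) (k n' : ℕ)
    (Z Z' : Finset V1) : Prop :=
  ∃ u : V2, k ≤ (N u ∩ Z).card ∧ (N u ∩ Z).card < n' ∧ Z' = Z ∪ N u

def TTerminal {V1 V2 : Type*} [DecidableEq V1] (N : V2 → Finset V1) (k n' : ℕ)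
    (S Z : Finset V1) : Prop :=
  Relation.ReflTransGen (TStep N k n') S Z ∧ ∀ Z', ¬ TStep N k n' Z Z'


/-- `C ≤ F^{V1}` is a Tanner code with component code `C' ≤ F^{N'}` for the bipartite graph
with neighborhoods `N : V2 → Finset V1`: for each constraint vertex `u` there is a code
monomially equivalent to `C'` (encoded by a bijection `e : N(u) ≃ N'` together with nonzero
scalars) containing the projection of `C` onto `N(u)`. -/
def IsTannerCode {V1 V2 N' : Type*} [DecidableEq V1] (F : Type*) [Field F]
    (N : V2 → Finset V1) (C : Submodule F (V1 → F)) (C' : Submodule F (N' → F)) : Prop :=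
  ∀ u : V2, ∃ (e : {v // v ∈ N u} ≃ N') (lam : N' → F), (∀ i, lam i ≠ 0) ∧
    ∀ c ∈ C, (fun i : N' => lam i * c (e.symm i : V1)) ∈ C'

/-- An `[n', k]` MDS code: dimension `k` and every nonzero codeword has weight at least
`n' - k + 1`. -/
def IsMDS {N' : Type*} [Fintype N'] (F : Type*) [Field F] [DecidableEq F]
    (C' : Submodule F (N' → F)) (n' k : ℕ) : Prop :=
  Fintype.card N' = n' ∧ Module.finrank F C' = k ∧
    ∀ x ∈ C', x ≠ 0 → n' - k + 1 ≤ (Finset.univ.filter fun i => x i ≠ 0).card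

/-- for a Tanner code `C = (G,C')` with `C'` an `[n',k]` MDS code, a
`k`-forcing set `S` contains an information set for `C`: some `B ⊆ S` with `#B = dim C`
such that the projection of `C` onto `B` is all of `F^B`. -/
theorem forcing_contains_information_set {V1 V2 N' : Type*} [Fintype V1] [DecidableEq V1]
    [Fintype V2] [Fintype N'] (F : Type*) [Field F] [Fintype F] [DecidableEq F]
    (N : V2 → Finset V1) (n' k : ℕ) (hreg : ∀ u : V2, (N u).card = n') (hk : k ≤ n')
    (C' : Submodule F (N' → F)) (hMDS : IsMDS F C' n' k)
    (C : Submodule F (V1 → F)) (hTan : IsTannerCode F N C C')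
    (S : Finset V1) (hforce : TTerminal N k n' S Finset.univ) :
    ∃ B : Finset V1, B ⊆ S ∧ B.card = Module.finrank F C ∧
      C.map (LinearMap.funLeft F F (fun v : {v // v ∈ B} => (v : V1))) = ⊤ := by
  classical
  obtain ⟨hreach, -⟩ := hforce
  -- Part 1: a codeword of `C` vanishing on `S` is zero.
  have key : ∀ c ∈ C, (∀ v ∈ S, c v = 0) → c = 0 := by
    intro c hc hvS
    have main : ∀ W : Finset V1, Relation.ReflTransGen (TStep N k n') S W →
        ∀ v ∈ W, c v = 0 := by
      intro W hW
      induction hW with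
      | refl => exact hvS
      | @tail Z Y hSZ step ih =>
          obtain ⟨u, hcard, -, rfl⟩ := step
          intro v hv
          rcases Finset.mem_union.mp hv with hvZ | hvN
          · exact ih v hvZ
          · obtain ⟨e, lam, hlam, hmem⟩ := hTan u
            set x : N' → F := fun i => lam i * c (e.symm i : V1) with hx
            have hxC' := hmem c hc
            have hx0 : x = 0 := by
              by_contra hne
              have hwt := hMDS.2.2 x hxC' hne
              have hle : (N u ∩ Z).card ≤ (univ.filter fun i => x i = 0).card := by
                rw [← Finset.card_attach (s := N u ∩ Z)]
                apply Finset.card_le_card_of_injOn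
                  (fun w => e ⟨w.1, (Finset.mem_inter.mp w.2).1⟩)
                · intro w _
                  simp only [Finset.mem_filter, Finset.mem_univ, true_and]
                  have hwz : (w : V1) ∈ Z := (Finset.mem_inter.mp w.2).2
                  have hcw : c ((e.symm (e ⟨w.1, (Finset.mem_inter.mp w.2).1⟩) : {v // v ∈ N u}) : V1) = 0 := by
                    rw [Equiv.symm_apply_apply]; exact ih _ hwz
                  simp only [hx, mul_eq_zero, Equiv.symm_apply_apply]
                  exact Finset.mem_coe.mpr (Finset.mem_filter.mpr ⟨Finset.mem_univ _, Or.inr hcw⟩)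
                · intro a _ b _ hab
                  have h1 := e.injective hab
                  have h2 : (a : V1) = (b : V1) :=
                    congrArg (fun z : {v // v ∈ N u} => (z : V1)) h1
                  exact Subtype.ext h2
              have hsum : (univ.filter fun i => x i = 0).card
                  + (univ.filter fun i => ¬ x i = 0).card = n' := by
                rw [Finset.card_filter_add_card_filter_not, Finset.card_univ, hMDS.1]
              simp only [ne_eq] at hwt
              omega
            have hxv := congrFun hx0 (e ⟨v, hvN⟩)
            simp only [hx, Pi.zero_apply, Equiv.symm_apply_apply] at hxv
            rcases mul_eq_zero.mp hxv with h | h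
            · exact absurd h (hlam _)
            · exact h
    funext v
    exact main Finset.univ hreach v (Finset.mem_univ v)
  -- Part 2: take a minimal subset of `S` on which the projection is injective.
  have hSgood : S ∈ S.powerset.filter
      (fun B => ∀ c ∈ C, (∀ v ∈ B, c v = 0) → c = 0) := by
    simp only [Finset.mem_filter, Finset.mem_powerset]
    exact ⟨le_refl S, key⟩
  obtain ⟨B, hBmem, hBmin⟩ := Finset.exists_min_image
    (S.powerset.filter (fun B => ∀ c ∈ C, (∀ v ∈ B, c v = 0) → c = 0))
    Finset.card ⟨S, hSgood⟩
  simp only [Finset.mem_filter, Finset.mem_powerset] at hBmem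
  obtain ⟨hBS, hBgood⟩ := hBmem
  set L : (V1 → F) →ₗ[F] ({v // v ∈ B} → F) :=
    LinearMap.funLeft F F (fun v : {v // v ∈ B} => (v : V1)) with hL
  -- standard basis vectors are in the image
  have hsingle : ∀ b : {v // v ∈ B}, ∃ c ∈ C,
      L c = fun j : {v // v ∈ B} => if b = j then (1 : F) else 0 := by
    intro b
    have herase : ¬ (∀ c ∈ C, (∀ v ∈ B.erase b.1, c v = 0) → c = 0) := by
      intro hgood
      have hmem' : B.erase b.1 ∈ S.powerset.filter
          (fun B => ∀ c ∈ C, (∀ v ∈ B, c v = 0) → c = 0) := by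
        simp only [Finset.mem_filter, Finset.mem_powerset]
        exact ⟨(Finset.erase_subset _ _).trans hBS, hgood⟩
      have := hBmin _ hmem'
      have hlt : (B.erase b.1).card < B.card := Finset.card_erase_lt_of_mem b.2
      omega
    push_neg at herase
    obtain ⟨c, hcC, hcvan, hcne⟩ := herase
    have hcb : c b.1 ≠ 0 := by
      intro h0
      apply hcne
      apply hBgood c hcC
      intro v hvB
      by_cases hvb : v = b.1
      · rw [hvb]; exact h0
      · exact hcvan v (Finset.mem_erase.mpr ⟨hvb, hvB⟩)
    refine ⟨(c b.1)⁻¹ • c, C.smul_mem _ hcC, ?_⟩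
    funext j
    by_cases hbj : b = j
    · subst hbj
      simp [hL, LinearMap.funLeft_apply, inv_mul_cancel₀ hcb]
    · have hj0 : c j.1 = 0 := by
        apply hcvan
        refine Finset.mem_erase.mpr ⟨?_, j.2⟩
        intro h
        exact hbj (Subtype.ext h.symm)
      simp [hL, LinearMap.funLeft_apply, hj0, hbj]
  -- surjectivity of the projection onto B
  have hmap : C.map L = ⊤ := by
    rw [eq_top_iff]
    intro y _
    choose cfun hcfunC hcfunL using hsingle
    have hy : y = ∑ b : {v // v ∈ B}, y b • L (cfun b) := by
      funext j
      simp only [Finset.sum_apply, Pi.smul_apply, smul_eq_mul]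
      rw [Finset.sum_congr rfl (fun b _ => by rw [hcfunL b])]
      simp
    have hy2 : y = L (∑ b : {v // v ∈ B}, y b • cfun b) := by
      rw [map_sum]
      simp only [map_smul]
      exact hy
    rw [hy2]
    exact Submodule.mem_map_of_mem
      (Submodule.sum_mem _ (fun b _ => C.smul_mem _ (hcfunC b)))
  refine ⟨B, hBS, ?_, hmap⟩
  -- the projection restricted to `C` is a linear equivalence, so cards match
  have hinj : Function.Injective (L.domRestrict C) := by
    rw [← LinearMap.ker_eq_bot, Submodule.eq_bot_iff]
    rintro ⟨c, hcC⟩ hker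
    have hLc : L c = 0 := hker
    have : c = 0 := by
      apply hBgood c hcC
      intro v hvB
      have := congrFun hLc ⟨v, hvB⟩
      simpa [hL, LinearMap.funLeft_apply] using this
    exact Subtype.ext this
  have hsurj : Function.Surjective (L.domRestrict C) := by
    rw [← LinearMap.range_eq_top, LinearMap.range_domRestrict]
    exact hmap
  have equiv := LinearEquiv.ofBijective (L.domRestrict C) ⟨hinj, hsurj⟩
  have h1 := equiv.finrank_eq
  rw [Module.finrank_pi, Fintype.card_coe] at h1
  exact h1.symm
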